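/- The limit as w → 0 (w real, w ≠ 0) of (2iπ)^{2p+1} e^{2iπw} A_{2p}(e^{2iπw}) / (1 - e^{2iπw})^{2p+1} + (2p)!/w^{2p+1} equals 0, for every integer p ≥ 1. -/

import Mathlib

open Complex Polynomial Filter

/-- The Eulerian polynomials, defined by the recurrence
`A 0 = 1`, `A (n+1) = (1 + n*X) * A n + X*(1-X) * (A n)'`. -/
noncomputable def eulerianPoly : ℕ → Polynomial ℤ
  | 0 => 1
  | n + 1 => (1 + Polynomial.C (n : ℤ) * Polynomial.X) * eulerianPoly n
      + Polynomial.X * (1 - Polynomial.X) * Polynomial.derivative (eulerianPoly n)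

/-- The Eulerian numbers `E(n,k)`, coefficients of the Eulerian polynomials. -/
noncomputable def eulerianNum (n k : ℕ) : ℤ := (eulerianPoly n).coeff k

open Metric Set Topology

private lemma iteratedDeriv_const_sub'' {n : ℕ} (hn : 0 < n) (c : ℂ) (f : ℂ → ℂ) (x : ℂ) :
    iteratedDeriv n (fun z => c - f z) x = -iteratedDeriv n f x := by
  rw [← iteratedDerivWithin_univ (f := fun z => c - f z), ← iteratedDerivWithin_univ (f := f),
    iteratedDerivWithin_const_sub hn c, iteratedDerivWithin_fun_neg f]

/-- If `f` is analytic at `0` and vanishes there, then `f z = z * g z` for an analytic `g`. -/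
private lemma analytic_factor {f : ℂ → ℂ} (hf : AnalyticAt ℂ f 0) (h0 : f 0 = 0) :
    ∃ g : ℂ → ℂ, AnalyticAt ℂ g 0 ∧ g 0 = deriv f 0 ∧ ∀ z, f z = z * g z := by
  classical
  set L := deriv f 0 with hL
  set g : ℂ → ℂ := fun z => if z = 0 then L else f z / z with hg
  have hslope : Tendsto g (𝓝[≠] (0:ℂ)) (𝓝 L) := by
    have hd := hf.differentiableAt.hasDerivAt
    rw [hasDerivAt_iff_tendsto_slope] at hd
    refine Filter.Tendsto.congr' ?_ hd
    filter_upwards [self_mem_nhdsWithin] with z hz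
    have hz0 : z ≠ 0 := hz
    simp [slope_def_field, h0, hg, hz0]
  have hg0 : g 0 = L := by simp [hg]
  have hgc : ContinuousAt g 0 := by
    rw [ContinuousAt, hg0, ← nhdsNE_sup_pure (0:ℂ), tendsto_sup]
    exact ⟨hslope, by simpa [hg0] using tendsto_pure_nhds g 0⟩
  have hdiff : ∀ᶠ z in 𝓝[≠] (0:ℂ), DifferentiableAt ℂ g z := by
    filter_upwards [hf.eventually_analyticAt.filter_mono nhdsWithin_le_nhds,
      self_mem_nhdsWithin] with z hz hz0
    have hz0' : z ≠ 0 := hz0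
    have hd : DifferentiableAt ℂ (fun w => f w / w) z :=
      (hz.differentiableAt).div differentiableAt_id hz0'
    refine hd.congr_of_eventuallyEq ?_
    filter_upwards [isOpen_ne.mem_nhds hz0'] with w hw
    simp [hg, hw]
  have hga : AnalyticAt ℂ g 0 :=
    Complex.analyticAt_of_differentiable_on_punctured_nhds_of_continuousAt hdiff hgc
  refine ⟨g, hga, hg0, fun z => ?_⟩
  rcases eq_or_ne z 0 with rfl | hz
  · simp [h0]
  · rw [hg]; simp only [hz, if_false]; field_simp

/-- The `m`-th derivative of `exp z / (1 - exp z) + 1 / z` is given by the Eulerian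
polynomials. -/
private lemma iter_deriv_u (m : ℕ) (z : ℂ) (h1 : exp z ≠ 1) (h0 : z ≠ 0) :
    iteratedDeriv m (fun z : ℂ => exp z / (1 - exp z) + 1 / z) z
      = exp z * (aeval (exp z) (eulerianPoly m) : ℂ) / (1 - exp z) ^ (m + 1)
        + ((-1) ^ m * (m.factorial : ℂ)) / z ^ (m + 1) := by
  induction m generalizing z with
  | zero =>
    simp [iteratedDeriv_zero, show eulerianPoly 0 = 1 from rfl]
  | succ m ih =>
    have hd1 : 1 - exp z ≠ 0 := sub_ne_zero.mpr (Ne.symm h1)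
    rw [iteratedDeriv_succ]
    have heq : iteratedDeriv m (fun z : ℂ => exp z / (1 - exp z) + 1 / z)
        =ᶠ[𝓝 z] fun w => exp w * (aeval (exp w) (eulerianPoly m) : ℂ) / (1 - exp w) ^ (m + 1)
          + ((-1) ^ m * (m.factorial : ℂ)) / w ^ (m + 1) := by
      filter_upwards [continuous_exp.continuousAt.eventually_ne h1, eventually_ne_nhds h0]
        with w hw1 hw0
      exact ih w hw1 hw0
    rw [heq.deriv_eq]
    have he := Complex.hasDerivAt_exp z
    have hpoly : HasDerivAt (fun w : ℂ => (aeval (exp w) (eulerianPoly m) : ℂ))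
        ((aeval (exp z) (derivative (eulerianPoly m)) : ℂ) * exp z) z := by
      simpa [Function.comp_def] using
        (Polynomial.hasDerivAt_aeval (q := eulerianPoly m) (exp z)).comp z he
    have hnum : HasDerivAt (fun w : ℂ => exp w * (aeval (exp w) (eulerianPoly m) : ℂ))
        (exp z * (aeval (exp z) (eulerianPoly m) : ℂ)
          + exp z * ((aeval (exp z) (derivative (eulerianPoly m)) : ℂ) * exp z)) z :=
      he.mul hpoly
    have hden : HasDerivAt (fun w : ℂ => (1 - exp w) ^ (m + 1))
        (((m : ℂ) + 1) * (1 - exp z) ^ m * (-exp z)) z := by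
      have h := (he.const_sub 1).fun_pow (m + 1)
      simpa [Nat.add_sub_cancel] using h
    have hq := hnum.div hden (pow_ne_zero _ hd1)
    have hzp : HasDerivAt (fun w : ℂ => w ^ (m + 1)) (((m : ℂ) + 1) * z ^ m) z := by
      simpa [Nat.add_sub_cancel] using hasDerivAt_pow (m + 1) z
    have hc := (hasDerivAt_const z ((-1 : ℂ) ^ m * (m.factorial : ℂ))).div hzp
      (pow_ne_zero _ h0)
    have hsum : HasDerivAt
        (fun w : ℂ => exp w * (aeval (exp w) (eulerianPoly m) : ℂ) / (1 - exp w) ^ (m + 1)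
          + ((-1) ^ m * (m.factorial : ℂ)) / w ^ (m + 1))
        (((exp z * (aeval (exp z) (eulerianPoly m) : ℂ)
            + exp z * ((aeval (exp z) (derivative (eulerianPoly m)) : ℂ) * exp z))
              * (1 - exp z) ^ (m + 1)
          - exp z * (aeval (exp z) (eulerianPoly m) : ℂ)
              * (((m : ℂ) + 1) * (1 - exp z) ^ m * (-exp z))) / ((1 - exp z) ^ (m + 1)) ^ 2
        + (0 * z ^ (m + 1) - (-1 : ℂ) ^ m * (m.factorial : ℂ) * (((m : ℂ) + 1) * z ^ m))
            / (z ^ (m + 1)) ^ 2) z := hq.add hc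
    rw [hsum.deriv]
    have hrec : (aeval (exp z) (eulerianPoly (m + 1)) : ℂ)
        = (1 + (m : ℂ) * exp z) * (aeval (exp z) (eulerianPoly m) : ℂ)
          + exp z * (1 - exp z) * (aeval (exp z) (derivative (eulerianPoly m)) : ℂ) := by
      rw [show eulerianPoly (m + 1) = (1 + Polynomial.C (m : ℤ) * Polynomial.X) * eulerianPoly m
        + Polynomial.X * (1 - Polynomial.X) * Polynomial.derivative (eulerianPoly m) from rfl]
      simp only [map_add, map_mul, map_one, map_sub, aeval_X, aeval_C]
      push_cast
      ring
    rw [hrec]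
    have hfact : (((m + 1).factorial : ℕ) : ℂ) = ((m : ℂ) + 1) * (m.factorial : ℂ) := by
      push_cast [Nat.factorial_succ]; ring
    rw [hfact]
    field_simp
    ring

private lemma key (n : ℕ) (hn : 1 ≤ n) (he : Even n) :
    Tendsto (fun z : ℂ => exp z * (aeval (exp z) (eulerianPoly n) : ℂ) / (1 - exp z) ^ (n + 1)
      + (n.factorial : ℂ) / z ^ (n + 1)) (𝓝[≠] (0:ℂ)) (𝓝 0) := by
  obtain ⟨s, hs, hs0, hseq⟩ := analytic_factor (f := fun z => 1 - exp z)
    (analyticAt_const.sub analyticAt_cexp) (by simp)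
  have hs0' : s 0 = -1 := by
    rw [hs0, deriv_const_sub]; simp
  obtain ⟨r, hr, -, hreq⟩ := analytic_factor (f := fun z => exp z + s z)
    (analyticAt_cexp.add hs) (by simp [hs0'])
  set U : ℂ → ℂ := fun z => r z / s z with hUdef
  have hU : AnalyticAt ℂ U 0 := hr.div hs (by simp [hs0'])
  have hev : ∀ᶠ z in 𝓝 (0:ℂ), s z ≠ 0 ∧ AnalyticAt ℂ U z :=
    (hs.continuousAt.eventually_ne (by simp [hs0'])).and hU.eventually_analyticAt
  obtain ⟨ε, hε, hball⟩ := Metric.mem_nhds_iff.mp hev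
  have hfacts : ∀ z ∈ ball (0:ℂ) ε, z ≠ 0 →
      (exp z ≠ 1 ∧ U z = exp z / (1 - exp z) + 1 / z) := by
    intro z hz hz0
    obtain ⟨hsz, -⟩ := hball hz
    have h1e : 1 - exp z = z * s z := hseq z
    have hd : 1 - exp z ≠ 0 := by rw [h1e]; exact mul_ne_zero hz0 hsz
    have h1 : exp z ≠ 1 := fun h => hd (by rw [h]; ring)
    refine ⟨h1, ?_⟩
    have h2 : exp z + s z = z * r z := hreq z
    have hexp : exp z = z * r z - s z := eq_sub_of_add_eq h2
    rw [hUdef, h1e, hexp]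
    field_simp
    ring
  set B : Set ℂ := ball (0:ℂ) ε \ {0} with hBdef
  have hBopen : IsOpen B := isOpen_ball.sdiff isClosed_singleton
  have hBmem : ∀ z ∈ B, z ≠ 0 ∧ exp z ≠ 1 ∧ U z = exp z / (1 - exp z) + 1 / z := by
    intro z hz
    have hz0 : z ≠ 0 := hz.2
    obtain ⟨h1, h2⟩ := hfacts z hz.1 hz0
    exact ⟨hz0, h1, h2⟩
  have hEq : Set.EqOn U (fun z : ℂ => exp z / (1 - exp z) + 1 / z) B :=
    fun z hz => (hBmem z hz).2.2
  have hIter : Set.EqOn (iteratedDeriv n U)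
      (iteratedDeriv n (fun z : ℂ => exp z / (1 - exp z) + 1 / z)) B :=
    hEq.iteratedDeriv_of_isOpen hBopen n
  have hAn : ∀ m : ℕ, AnalyticOnNhd ℂ (iteratedDeriv m U) (ball (0:ℂ) ε) := by
    intro m
    induction m with
    | zero => intro z hz; simpa [iteratedDeriv_zero] using (hball hz).2
    | succ m ih => rw [iteratedDeriv_succ]; exact ih.deriv
  have hHat : AnalyticAt ℂ (iteratedDeriv n U) 0 := hAn n 0 (mem_ball_self hε)
  have hsymmB : ∀ z ∈ B, (-z) ∈ B := by
    intro z hz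
    refine ⟨?_, ?_⟩
    · have := hz.1
      simpa [mem_ball_zero_iff] using (by simpa [mem_ball_zero_iff] using this : ‖z‖ < ε)
    · simp only [mem_singleton_iff, neg_eq_zero]
      exact hz.2
  have hUodd : ∀ z ∈ B, U z = -1 - U (-z) := by
    intro z hz
    obtain ⟨hz0, h1, hUz⟩ := hBmem z hz
    obtain ⟨-, h1', hUz'⟩ := hBmem (-z) (hsymmB z hz)
    rw [hUz, hUz']
    have h2 : exp (-z) = (exp z)⁻¹ := exp_neg z
    have hd1 : 1 - exp z ≠ 0 := sub_ne_zero.mpr (Ne.symm h1)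
    have hd2 : 1 - exp (-z) ≠ 0 := sub_ne_zero.mpr (Ne.symm h1')
    rw [h2] at hd2 ⊢
    have hez : exp z ≠ 0 := exp_ne_zero z
    have key1 : (exp z)⁻¹ / (1 - (exp z)⁻¹) = -(1 / (1 - exp z)) := by
      rw [div_eq_iff hd2]
      field_simp
      ring
    rw [key1]
    field_simp [hz0, hd1]
    ring
  have hBn : B ∈ 𝓝[≠] (0:ℂ) := by
    rw [hBdef, diff_eq]
    exact inter_mem (mem_nhdsWithin_of_mem_nhds (ball_mem_nhds _ hε)) self_mem_nhdsWithin
  set V : ℂ → ℂ := fun z => -1 - U (-z) with hVdef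
  have hVan : AnalyticAt ℂ V 0 := by
    have hU' : AnalyticAt ℂ U (-(0:ℂ)) := by rw [neg_zero]; exact hU
    have hneg : AnalyticAt ℂ (fun z : ℂ => -z) 0 := analyticAt_id.neg
    have hcomp : AnalyticAt ℂ (fun z : ℂ => U (-z)) 0 := by
      simpa [Function.comp_def] using hU'.comp hneg
    exact analyticAt_const.sub hcomp
  have hUVpunct : U =ᶠ[𝓝[≠] (0:ℂ)] V := by
    filter_upwards [hBn] with z hz
    exact hUodd z hz
  have hUV0 : U 0 = V 0 := by
    have t1 : Tendsto U (𝓝[≠] (0:ℂ)) (𝓝 (U 0)) := hU.continuousAt.continuousWithinAt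
    have t2 : Tendsto U (𝓝[≠] (0:ℂ)) (𝓝 (V 0)) :=
      Filter.Tendsto.congr' hUVpunct.symm hVan.continuousAt.continuousWithinAt
    exact tendsto_nhds_unique t1 t2
  have hUVn : U =ᶠ[𝓝 (0:ℂ)] V := by
    rw [Filter.EventuallyEq, ← nhdsNE_sup_pure (0:ℂ), eventually_sup,
      eventually_pure]
    exact ⟨hUVpunct, hUV0⟩
  have hH0 : iteratedDeriv n U 0 = 0 := by
    have h1 : iteratedDeriv n U 0 = iteratedDeriv n V 0 := hUVn.iteratedDeriv_eq n
    have h2 : iteratedDeriv n V 0 = -iteratedDeriv n (fun z : ℂ => U (-z)) 0 :=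
      iteratedDeriv_const_sub'' hn (-1) _ 0
    have h3 : iteratedDeriv n (fun z : ℂ => U (-z)) 0
        = (-1 : ℂ) ^ n • iteratedDeriv n U (-0) := iteratedDeriv_comp_neg n U 0
    have h5 : iteratedDeriv n V 0 = -iteratedDeriv n U 0 := by
      rw [h2, h3, neg_zero, he.neg_one_pow, one_smul]
    have h4 := h1.trans h5
    rw [eq_neg_iff_add_eq_zero] at h4
    exact add_self_eq_zero.mp h4
  have hT : Tendsto (iteratedDeriv n U) (𝓝[≠] (0:ℂ)) (𝓝 0) := by
    have t : Tendsto (iteratedDeriv n U) (𝓝[≠] (0:ℂ)) (𝓝 (iteratedDeriv n U 0)) :=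
      hHat.continuousAt.continuousWithinAt
    rwa [hH0] at t
  refine Filter.Tendsto.congr' ?_ hT
  filter_upwards [hBn] with z hz
  obtain ⟨hz0, h1, -⟩ := hBmem z hz
  rw [hIter hz, iter_deriv_u n z h1 hz0, he.neg_one_pow, one_mul]

theorem limit_odd_case_eq_zero (p : ℕ) (hp : 1 ≤ p) :
    Filter.Tendsto
      (fun w : ℝ =>
        (2 * Complex.I * Real.pi) ^ (2 * p + 1) *
            Complex.exp (2 * Complex.I * Real.pi * w) *
            Polynomial.aeval (Complex.exp (2 * Complex.I * Real.pi * w)) (eulerianPoly (2 * p)) /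
            (1 - Complex.exp (2 * Complex.I * Real.pi * w)) ^ (2 * p + 1)
          + (Nat.factorial (2 * p) : ℂ) / (w : ℂ) ^ (2 * p + 1))
      (nhdsWithin 0 {0}ᶜ) (nhds 0) := by
  have he : Even (2 * p) := even_two_mul p
  have hkey := key (2 * p) (by omega) he
  have hπ : ((Real.pi : ℂ)) ≠ 0 := by exact_mod_cast Real.pi_ne_zero
  have hc0 : (2 * Complex.I * (Real.pi : ℂ)) ≠ 0 := by
    simp [Complex.I_ne_zero, hπ]
  have hck : (2 * Complex.I * (Real.pi : ℂ)) ^ (2 * p + 1) ≠ 0 := pow_ne_zero _ hc0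
  have hmap : Tendsto (fun w : ℝ => 2 * Complex.I * (Real.pi : ℂ) * (w : ℂ)) (𝓝[≠] (0:ℝ))
      (𝓝[≠] (0:ℂ)) := by
    rw [tendsto_nhdsWithin_iff]
    constructor
    · have hcont : Continuous (fun w : ℝ => 2 * Complex.I * (Real.pi : ℂ) * (w : ℂ)) :=
        continuous_const.mul Complex.continuous_ofReal
      have := (hcont.tendsto 0).mono_left (nhdsWithin_le_nhds (s := {(0:ℝ)}ᶜ))
      simpa using this
    · filter_upwards [self_mem_nhdsWithin] with w hw
      have hw0 : (w : ℂ) ≠ 0 := by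
        simpa using Complex.ofReal_ne_zero.mpr hw
      exact mul_ne_zero hc0 hw0
  have h2 := (hkey.comp hmap).const_mul ((2 * Complex.I * (Real.pi : ℂ)) ^ (2 * p + 1))
  rw [mul_zero] at h2
  refine Filter.Tendsto.congr' ?_ h2
  filter_upwards [self_mem_nhdsWithin] with w hw
  have hw0 : (w : ℂ) ≠ 0 := by simpa using Complex.ofReal_ne_zero.mpr hw
  simp only [Function.comp]
  set c : ℂ := (2 * Complex.I * (Real.pi : ℂ)) ^ (2 * p + 1) with hcdef
  set z : ℂ := 2 * Complex.I * (Real.pi : ℂ) * (w : ℂ) with hzdef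
  rw [mul_add]
  congr 1
  · rw [← mul_div_assoc, ← mul_assoc]
  · have hzp : z ^ (2 * p + 1) = c * (w : ℂ) ^ (2 * p + 1) := by
      rw [hzdef, hcdef, mul_pow]
    rw [hzp]
    rw [mul_comm c ((w : ℂ) ^ (2 * p + 1)), ← div_div, mul_div_assoc']
    rw [mul_comm c _, mul_div_assoc, div_self hck, mul_one]
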